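/- Let R be a multigraph with multiplicity 2 on k vertices such that every vertex has degree (counting double edges twice) at least (1 + μ)k, where 0 < μ < 1. Then for sufficiently large k, R contains a collection of vertex-disjoint copies of K_2^= (double edges) and K_3 (triangles) covering all but fewer than 1/μ vertices. -/

import Mathlib

def IsTile {V : Type*} [DecidableEq V] (m : V → V → ℕ) (t : Finset V) : Prop :=
  (∃ u v : V, u ≠ v ∧ t = {u, v} ∧ m u v = 2) ∨
  (∃ u v w : V, u ≠ v ∧ u ≠ w ∧ v ≠ w ∧ t = {u, v, w} ∧
    1 ≤ m u v ∧ 1 ≤ m u w ∧ 1 ≤ m v w)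

def IsTiling {V : Type*} [DecidableEq V] (m : V → V → ℕ) (T : Finset (Finset V)) : Prop :=
  (∀ t ∈ T, IsTile m t) ∧ (T : Set (Finset V)).Pairwise (fun a b => Disjoint a b)

open Finset

set_option maxHeartbeats 1000000

section Aux
variable {V : Type*} [DecidableEq V] [Fintype V] {m : V → V → ℕ} {T : Finset (Finset V)}

lemma improve (hT : IsTiling m T)
    (hmax : ∀ T', IsTiling m T' → (T'.biUnion id).card ≤ (T.biUnion id).card)
    (t : Finset V) (ht : t ∈ T ∨ t = ∅)
    (S : Finset (Finset V)) (hS1 : ∀ s ∈ S, IsTile m s)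
    (hS2 : (S : Set (Finset V)).Pairwise (fun a b => Disjoint a b))
    (hS3 : ∀ s ∈ S, s ⊆ t ∪ (Finset.univ \ T.biUnion id))
    (W : Finset V) (hW : W ⊆ S.biUnion id ∪ (T.biUnion id \ t))
    (hWc : (T.biUnion id).card < W.card) : False := by
  have key : ∀ a b : Finset V, a ∈ S → b ∈ T.erase t → Disjoint a b := by
    intro a b haS hbT
    rw [disjoint_left]
    intro v hva hvb
    rcases mem_union.1 (hS3 a haS hva) with hvt | hvU
    · have htT : t ∈ T := by
        rcases ht with h | h
        · exact h
        · rw [h] at hvt; exact absurd hvt (notMem_empty v)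
      have hbt : b ≠ t := ne_of_mem_erase hbT
      have hdisj : Disjoint t b :=
        hT.2 (mem_coe.mpr htT) (mem_coe.mpr (mem_of_mem_erase hbT)) hbt.symm
      exact (disjoint_left.1 hdisj) hvt hvb
    · have : v ∈ T.biUnion id := mem_biUnion.2 ⟨b, mem_of_mem_erase hbT, hvb⟩
      exact (mem_sdiff.1 hvU).2 this
  have htiling : IsTiling m (S ∪ T.erase t) := by
    constructor
    · intro s hs
      rcases mem_union.1 hs with h | h
      · exact hS1 s h
      · exact hT.1 s (mem_of_mem_erase h)
    · intro a ha b hb hab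
      rw [coe_union, Set.mem_union] at ha hb
      rcases ha with ha | ha <;> rcases hb with hb | hb
      · exact hS2 ha hb hab
      · exact key a b (mem_coe.1 ha) (mem_coe.1 hb)
      · exact (key b a (mem_coe.1 hb) (mem_coe.1 ha)).symm
      · exact hT.2 (mem_coe.mpr (mem_of_mem_erase (mem_coe.1 ha)))
          (mem_coe.mpr (mem_of_mem_erase (mem_coe.1 hb))) hab
  have hcov : W ⊆ (S ∪ T.erase t).biUnion id := by
    intro v hv
    rcases mem_union.1 (hW hv) with h | h
    · obtain ⟨s, hs, hvs⟩ := mem_biUnion.1 h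
      exact mem_biUnion.2 ⟨s, mem_union_left _ hs, hvs⟩
    · obtain ⟨hvC, hvt⟩ := mem_sdiff.1 h
      obtain ⟨s, hs, hvs⟩ := mem_biUnion.1 hvC
      have : s ≠ t := fun h => hvt (h ▸ hvs)
      exact mem_biUnion.2 ⟨s, mem_union_right _ (mem_erase.2 ⟨this, hs⟩), hvs⟩
  have := hmax _ htiling
  have := card_le_card hcov
  omega

/-- adding a double edge inside the uncovered set -/
lemma improveA (hT : IsTiling m T)
    (hmax : ∀ T', IsTiling m T' → (T'.biUnion id).card ≤ (T.biUnion id).card)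
    {x y : V} (hx : x ∈ Finset.univ \ T.biUnion id) (hy : y ∈ Finset.univ \ T.biUnion id)
    (hxy : x ≠ y) (h2 : m x y = 2) : False := by
  set C := T.biUnion id with hC
  have hxC : x ∉ C := (mem_sdiff.1 hx).2
  have hyC : y ∉ C := (mem_sdiff.1 hy).2
  refine improve hT hmax ∅ (Or.inr rfl) {({x, y} : Finset V)} ?_ ?_ ?_
    (insert x (insert y C)) ?_ ?_
  · intro s hs
    rw [mem_singleton] at hs
    subst hs
    exact Or.inl ⟨x, y, hxy, rfl, h2⟩
  · simp
  · intro s hs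
    rw [mem_singleton] at hs
    subst hs
    rw [empty_union, insert_subset_iff, singleton_subset_iff]
    exact ⟨hx, hy⟩
  · rw [singleton_biUnion, sdiff_empty]
    intro v hv
    simp only [mem_insert, id] at hv ⊢
    rw [mem_union, mem_insert, mem_singleton]
    tauto
  · rw [← hC, card_insert_of_notMem (by simp [hxy, hxC]), card_insert_of_notMem hyC]
    omega

/-- turning a double-edge tile into a triangle -/
lemma improveC (hT : IsTiling m T)
    (hmax : ∀ T', IsTiling m T' → (T'.biUnion id).card ≤ (T.biUnion id).card)
    {x a b : V} (htT : ({a, b} : Finset V) ∈ T) (hab : a ≠ b)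
    (hx : x ∈ Finset.univ \ T.biUnion id)
    (hxa : 1 ≤ m x a) (hxb : 1 ≤ m x b) (hab1 : 1 ≤ m a b) : False := by
  set C := T.biUnion id with hC
  have hxC : x ∉ C := (mem_sdiff.1 hx).2
  have haC : a ∈ C := (subset_biUnion_of_mem id htT) (by simp)
  have hbC : b ∈ C := (subset_biUnion_of_mem id htT) (by simp)
  have hxa' : x ≠ a := fun h => hxC (h ▸ haC)
  have hxb' : x ≠ b := fun h => hxC (h ▸ hbC)
  refine improve hT hmax {a, b} (Or.inl htT) {({x, a, b} : Finset V)} ?_ ?_ ?_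
    (insert x C) ?_ ?_
  · intro s hs
    rw [mem_singleton] at hs
    subst hs
    exact Or.inr ⟨x, a, b, hxa', hxb', hab, rfl, hxa, hxb, hab1⟩
  · simp
  · intro s hs
    rw [mem_singleton] at hs
    subst hs
    intro v hv
    simp only [mem_insert, mem_singleton] at hv
    rw [mem_union]
    rcases hv with rfl | rfl | rfl
    · exact Or.inr hx
    · exact Or.inl (by simp)
    · exact Or.inl (by simp)
  · rw [singleton_biUnion]
    intro v hv
    rcases mem_insert.1 hv with rfl | hvC
    · exact mem_union_left _ (by simp)
    · by_cases hvt : v ∈ ({a, b} : Finset V)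
      · refine mem_union_left _ ?_
        simp only [id, mem_insert, mem_singleton] at hvt ⊢
        tauto
      · exact mem_union_right _ (mem_sdiff.2 ⟨hvC, hvt⟩)
  · rw [← hC, card_insert_of_notMem hxC]
    omega

/-- splitting a triangle into two double edges -/
lemma improve1 (hT : IsTiling m T)
    (hmax : ∀ T', IsTiling m T' → (T'.biUnion id).card ≤ (T.biUnion id).card)
    {t : Finset V} (htT : t ∈ T) (ht3 : t.card = 3)
    {x y p q : V} (hx : x ∈ Finset.univ \ T.biUnion id) (hy : y ∈ Finset.univ \ T.biUnion id)
    (hxy : x ≠ y) (hp : p ∈ t) (hq : q ∈ t) (hpq : p ≠ q)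
    (hxp : m x p = 2) (hyq : m y q = 2) : False := by
  set C := T.biUnion id with hC
  have htC : t ⊆ C := subset_biUnion_of_mem id htT
  have hxC : x ∉ C := (mem_sdiff.1 hx).2
  have hyC : y ∉ C := (mem_sdiff.1 hy).2
  have hpC : p ∈ C := htC hp
  have hqC : q ∈ C := htC hq
  have hxp' : x ≠ p := fun h => hxC (h ▸ hpC)
  have hyq' : y ≠ q := fun h => hyC (h ▸ hqC)
  have hxq' : x ≠ q := fun h => hxC (h ▸ hqC)
  have hyp' : y ≠ p := fun h => hyC (h ▸ hpC)
  have hct : 3 ≤ C.card := ht3 ▸ card_le_card htC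
  refine improve hT hmax t (Or.inl htT) {({x, p} : Finset V), ({y, q} : Finset V)} ?_ ?_ ?_
    (insert x (insert y ({p, q} ∪ (C \ t)))) ?_ ?_
  · intro s hs
    rcases mem_insert.1 hs with rfl | hs
    · exact Or.inl ⟨x, p, hxp', rfl, hxp⟩
    · rw [mem_singleton] at hs; subst hs
      exact Or.inl ⟨y, q, hyq', rfl, hyq⟩
  · intro s hs s' hs' hss'
    simp only [coe_insert, coe_singleton, Set.mem_insert_iff, Set.mem_singleton_iff] at hs hs'
    have hd : Disjoint ({x, p} : Finset V) ({y, q} : Finset V) := by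
      rw [disjoint_left]
      intro v hv hv'
      simp only [mem_insert, mem_singleton] at hv hv'
      rcases hv with rfl | rfl <;> rcases hv' with rfl | rfl
      · exact hxy rfl
      · exact hxq' rfl
      · exact hyp' rfl
      · exact hpq rfl
    rcases hs with rfl | rfl <;> rcases hs' with rfl | rfl
    · exact absurd rfl hss'
    · exact hd
    · exact hd.symm
    · exact absurd rfl hss'
  · intro s hs
    rcases mem_insert.1 hs with rfl | hs
    · intro v hv
      rcases mem_insert.1 hv with rfl | hv
      · exact mem_union_right _ hx
      · rw [mem_singleton] at hv; subst hv; exact mem_union_left _ hp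
    · rw [mem_singleton] at hs; subst hs
      intro v hv
      rcases mem_insert.1 hv with rfl | hv
      · exact mem_union_right _ hy
      · rw [mem_singleton] at hv; subst hv; exact mem_union_left _ hq
  · intro v hv
    have hxm : x ∈ Finset.biUnion {({x, p} : Finset V), ({y, q} : Finset V)} id :=
      mem_biUnion.2 ⟨{x, p}, by simp, by simp⟩
    have hym : y ∈ Finset.biUnion {({x, p} : Finset V), ({y, q} : Finset V)} id :=
      mem_biUnion.2 ⟨{y, q}, by simp, by simp⟩
    have hpm : p ∈ Finset.biUnion {({x, p} : Finset V), ({y, q} : Finset V)} id :=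
      mem_biUnion.2 ⟨{x, p}, by simp, by simp⟩
    have hqm : q ∈ Finset.biUnion {({x, p} : Finset V), ({y, q} : Finset V)} id :=
      mem_biUnion.2 ⟨{y, q}, by simp, by simp⟩
    rcases mem_insert.1 hv with rfl | hv
    · exact mem_union_left _ hxm
    rcases mem_insert.1 hv with rfl | hv
    · exact mem_union_left _ hym
    rcases mem_union.1 hv with hv | hv
    · rcases mem_insert.1 hv with rfl | hv
      · exact mem_union_left _ hpm
      · rw [mem_singleton] at hv; subst hv; exact mem_union_left _ hqm
    · exact mem_union_right _ hv
  · have h1 : ({p, q} : Finset V) ∪ (C \ t) = insert p (insert q (C \ t)) := by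
      ext v; simp [or_assoc]
    have hpd : p ∉ C \ t := fun h => (mem_sdiff.1 h).2 hp
    have hqd : q ∉ C \ t := fun h => (mem_sdiff.1 h).2 hq
    have hyd : y ∉ ({p, q} : Finset V) ∪ (C \ t) := by
      rw [mem_union]
      rintro (h | h)
      · simp only [mem_insert, mem_singleton] at h
        rcases h with rfl | rfl
        · exact hyp' rfl
        · exact hyq' rfl
      · exact hyC (mem_sdiff.1 h).1
    have hxd : x ∉ insert y (({p, q} : Finset V) ∪ (C \ t)) := by
      rw [mem_insert]
      rintro (rfl | h)
      · exact hxy rfl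
      · rcases mem_union.1 h with h | h
        · simp only [mem_insert, mem_singleton] at h
          rcases h with rfl | rfl
          · exact hxp' rfl
          · exact hxq' rfl
        · exact hxC (mem_sdiff.1 h).1
    rw [← hC, card_insert_of_notMem hxd, card_insert_of_notMem hyd, h1,
      card_insert_of_notMem (by rw [mem_insert]; exact fun h => h.elim hpq (fun h => hpd h)),
      card_insert_of_notMem hqd, card_sdiff_of_subset htC, ht3]
    omega

/-- a double edge from uncovered x plus a triangle through uncovered y -/
lemma improve2 (hT : IsTiling m T)
    (hmax : ∀ T', IsTiling m T' → (T'.biUnion id).card ≤ (T.biUnion id).card)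
    {t : Finset V} (htT : t ∈ T)
    {x y p b c : V} (hx : x ∈ Finset.univ \ T.biUnion id) (hy : y ∈ Finset.univ \ T.biUnion id)
    (hxy : x ≠ y)
    (hteq : t = {p, b, c}) (hpb : p ≠ b) (hpc : p ≠ c) (hbc : b ≠ c)
    (hxp : m x p = 2) (hyb : 1 ≤ m y b) (hyc : 1 ≤ m y c) (hbc1 : 1 ≤ m b c) : False := by
  set C := T.biUnion id with hC
  have htC : t ⊆ C := subset_biUnion_of_mem id htT
  have hxC : x ∉ C := (mem_sdiff.1 hx).2
  have hyC : y ∉ C := (mem_sdiff.1 hy).2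
  have hpt : p ∈ t := by rw [hteq]; simp
  have hbt : b ∈ t := by rw [hteq]; simp
  have hct : c ∈ t := by rw [hteq]; simp
  have hxp' : x ≠ p := fun h => hxC (h ▸ htC hpt)
  have hyb' : y ≠ b := fun h => hyC (h ▸ htC hbt)
  have hyc' : y ≠ c := fun h => hyC (h ▸ htC hct)
  have hyp' : y ≠ p := fun h => hyC (h ▸ htC hpt)
  have hxb' : x ≠ b := fun h => hxC (h ▸ htC hbt)
  have hxc' : x ≠ c := fun h => hxC (h ▸ htC hct)
  refine improve hT hmax t (Or.inl htT) {({x, p} : Finset V), ({y, b, c} : Finset V)} ?_ ?_ ?_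
    (insert x (insert y C)) ?_ ?_
  · intro s hs
    rcases mem_insert.1 hs with rfl | hs
    · exact Or.inl ⟨x, p, hxp', rfl, hxp⟩
    · rw [mem_singleton] at hs; subst hs
      exact Or.inr ⟨y, b, c, hyb', hyc', hbc, rfl, hyb, hyc, hbc1⟩
  · intro s hs s' hs' hss'
    simp only [coe_insert, coe_singleton, Set.mem_insert_iff, Set.mem_singleton_iff] at hs hs'
    have hd : Disjoint ({x, p} : Finset V) ({y, b, c} : Finset V) := by
      rw [disjoint_left]
      intro v hv hv'
      simp only [mem_insert, mem_singleton] at hv hv'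
      rcases hv with rfl | rfl
      · rcases hv' with rfl | rfl | rfl
        · exact hxy rfl
        · exact hxb' rfl
        · exact hxc' rfl
      · rcases hv' with rfl | rfl | rfl
        · exact hyp' rfl
        · exact hpb rfl
        · exact hpc rfl
    rcases hs with rfl | rfl <;> rcases hs' with rfl | rfl
    · exact absurd rfl hss'
    · exact hd
    · exact hd.symm
    · exact absurd rfl hss'
  · intro s hs
    rcases mem_insert.1 hs with rfl | hs
    · intro v hv
      rcases mem_insert.1 hv with rfl | hv
      · exact mem_union_right _ hx
      · rw [mem_singleton] at hv; subst hv; exact mem_union_left _ hpt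
    · rw [mem_singleton] at hs; subst hs
      intro v hv
      rcases mem_insert.1 hv with rfl | hv
      · exact mem_union_right _ hy
      rcases mem_insert.1 hv with rfl | hv
      · exact mem_union_left _ hbt
      · rw [mem_singleton] at hv; subst hv; exact mem_union_left _ hct
  · intro v hv
    have hSb : ∀ w : V, w ∈ ({x, p} : Finset V) ∨ w ∈ ({y, b, c} : Finset V) →
        w ∈ Finset.biUnion {({x, p} : Finset V), ({y, b, c} : Finset V)} id := by
      rintro w (h | h)
      · exact mem_biUnion.2 ⟨{x, p}, by simp, h⟩
      · exact mem_biUnion.2 ⟨{y, b, c}, mem_insert.2 (Or.inr (by simp)), h⟩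
    rcases mem_insert.1 hv with rfl | hv
    · exact mem_union_left _ (hSb _ (Or.inl (by simp)))
    rcases mem_insert.1 hv with rfl | hv
    · exact mem_union_left _ (hSb _ (Or.inr (by simp)))
    by_cases hvt : v ∈ t
    · rw [hteq] at hvt
      simp only [mem_insert, mem_singleton] at hvt
      rcases hvt with rfl | rfl | rfl
      · exact mem_union_left _ (hSb _ (Or.inl (by simp)))
      · exact mem_union_left _ (hSb _ (Or.inr (by simp)))
      · exact mem_union_left _ (hSb _ (Or.inr (by simp)))
    · exact mem_union_right _ (mem_sdiff.2 ⟨hv, hvt⟩)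
  · rw [← hC, card_insert_of_notMem (by rw [mem_insert]; exact fun h => h.elim hxy (fun h => hxC h)),
      card_insert_of_notMem hyC]
    omega

end Aux

theorem stmt5 (μ : ℝ) (hμ0 : 0 < μ) (hμ1 : μ < 1) :
    ∃ k0 : ℕ, ∀ k ≥ k0, ∀ m : Fin k → Fin k → ℕ,
      (∀ u v, m u v = m v u) → (∀ v, m v v = 0) → (∀ u v, m u v ≤ 2) →
      (∀ v, (1 + μ) * k ≤ ((∑ u, m v u : ℕ) : ℝ)) →
      ∃ T : Finset (Finset (Fin k)), IsTiling m T ∧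
        ((k : ℝ) - ((T.biUnion id).card : ℝ)) < 1 / μ := by
  classical
  refine ⟨0, fun k _ m hsym hdiag hle2 hdeg => ?_⟩
  obtain ⟨T, hTmem, hTmax⟩ := Finset.exists_max_image
    (Finset.univ.filter (fun T : Finset (Finset (Fin k)) => IsTiling m T))
    (fun T => (T.biUnion id).card)
    ⟨∅, mem_filter.2 ⟨mem_univ _, by simp [IsTiling]⟩⟩
  have hT : IsTiling m T := (mem_filter.1 hTmem).2
  have hmax : ∀ T', IsTiling m T' → (T'.biUnion id).card ≤ (T.biUnion id).card :=
    fun T' h => hTmax T' (mem_filter.2 ⟨mem_univ _, h⟩)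
  refine ⟨T, hT, ?_⟩
  set C := T.biUnion id with hC
  set U := Finset.univ \ C with hU
  have hUC : U.card + C.card = k := by
    rw [hU]
    rw [card_sdiff_add_card_eq_card (subset_univ C), card_univ, Fintype.card_fin]
  rcases U.eq_empty_or_nonempty with hUe | hUne
  · have : U.card = 0 := by rw [hUe]; rfl
    have hck : C.card = k := by omega
    rw [hck]
    simp only [sub_self]
    positivity
  -- U nonempty
  have hu1 : 1 ≤ U.card := card_pos.2 hUne
  -- no double edges inside U
  have hA : ∀ x ∈ U, ∀ y ∈ U, x ≠ y → m x y ≤ 1 := by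
    intro x hx y hy hxy
    by_contra h
    have h2 : m x y = 2 := by have := hle2 x y; omega
    exact improveA hT hmax hx hy hxy h2
  -- within-U degree bound
  have hB1 : ∀ x ∈ U, ∑ v ∈ U, m x v + 1 ≤ U.card := by
    intro x hx
    have h1 : ∑ v ∈ U, m x v = ∑ v ∈ U.erase x, m x v := (Finset.sum_erase _ (hdiag x)).symm
    have h2 : ∑ v ∈ U.erase x, m x v ≤ (U.erase x).card • 1 := by
      refine sum_le_card_nsmul _ _ _ ?_
      intro v hv
      exact hA x hx v (mem_of_mem_erase hv) (fun h => (mem_erase.1 hv).1 h.symm)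
    rw [smul_eq_mul, mul_one, card_erase_of_mem hx] at h2
    omega
  -- per-tile bound
  have hB2 : ∀ t ∈ T, ∑ x ∈ U, ∑ v ∈ t, m x v ≤ t.card * (U.card + 1) := by
    intro t htT
    rcases hT.1 t htT with ⟨a, b, hab, hteq, hab2⟩ | ⟨a, b, c, hab, hac, hbc, hteq, e1, e2, e3⟩
    · -- double edge tile
      subst hteq
      have hcard : ({a, b} : Finset (Fin k)).card = 2 := card_pair hab
      rw [hcard]
      have hx : ∀ x ∈ U, ∑ v ∈ ({a, b} : Finset (Fin k)), m x v ≤ 2 := by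
        intro x hx
        rw [sum_pair hab]
        by_contra h
        push_neg at h
        have hxa : 1 ≤ m x a := by have := hle2 x b; omega
        have hxb : 1 ≤ m x b := by have := hle2 x a; omega
        exact improveC hT hmax htT hab hx hxa hxb (by omega)
      calc ∑ x ∈ U, ∑ v ∈ ({a, b} : Finset (Fin k)), m x v ≤ U.card • 2 :=
            sum_le_card_nsmul _ _ _ hx
        _ ≤ 2 * (U.card + 1) := by rw [smul_eq_mul]; omega
    · -- triangle tile
      subst hteq
      have hcard : ({a, b, c} : Finset (Fin k)).card = 3 := by
        rw [card_insert_of_notMem (by simp [hab, hac]), card_pair hbc]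
      rw [hcard]
      set w : Fin k → ℕ := fun x => m x a + m x b + m x c with hw
      have hsum : ∀ x, ∑ v ∈ ({a, b, c} : Finset (Fin k)), m x v = w x := by
        intro x
        rw [sum_insert (by simp [hab, hac]), sum_pair hbc]
        simp only [hw]
        ring
      have hw6 : ∀ x, w x ≤ 6 := by
        intro x
        have := hle2 x a; have := hle2 x b; have := hle2 x c
        simp only [hw]; omega
      -- D1 : at most one uncovered vertex with w ≥ 4
      have hD1 : ∀ x ∈ U, ∀ y ∈ U, x ≠ y → 4 ≤ w x → 4 ≤ w y → False := by
        intro x hx y hy hxy h4x h4y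
        have hxa2 := hle2 x a; have hxb2 := hle2 x b; have hxc2 := hle2 x c
        have hya2 := hle2 y a; have hyb2 := hle2 y b; have hyc2 := hle2 y c
        simp only [hw] at h4x h4y
        by_cases hP : ∃ p ∈ ({a, b, c} : Finset (Fin k)), ∃ q ∈ ({a, b, c} : Finset (Fin k)),
            p ≠ q ∧ m x p = 2 ∧ m y q = 2
        · obtain ⟨p, hp, q, hq, hpq, hxp, hyq⟩ := hP
          exact improve1 hT hmax htT hcard hx hy hxy hp hq hpq hxp hyq
        · push_neg at hP
          have hpx : m x a = 2 ∨ m x b = 2 ∨ m x c = 2 := by omega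
          have hpy : m y a = 2 ∨ m y b = 2 ∨ m y c = 2 := by omega
          have hma : a ∈ ({a, b, c} : Finset (Fin k)) := by simp
          have hmb : b ∈ ({a, b, c} : Finset (Fin k)) := by simp
          have hmc : c ∈ ({a, b, c} : Finset (Fin k)) := by simp
          rcases hpx with hxp | hxp | hxp
          · have h1 : m y b ≠ 2 := hP a hma b hmb hab hxp
            have h2 : m y c ≠ 2 := hP a hma c hmc hac hxp
            exact improve2 hT hmax htT hx hy hxy rfl hab hac hbc hxp
              (by omega) (by omega) e3
          · have h1 : m y a ≠ 2 := hP b hmb a hma hab.symm hxp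
            have h2 : m y c ≠ 2 := hP b hmb c hmc hbc hxp
            have hperm : ({a, b, c} : Finset (Fin k)) = {b, a, c} := by
              ext v; simp only [mem_insert, mem_singleton]; tauto
            exact improve2 hT hmax htT hx hy hxy hperm hab.symm hbc hac hxp
              (by omega) (by omega) e2
          · have h1 : m y a ≠ 2 := hP c hmc a hma hac.symm hxp
            have h2 : m y b ≠ 2 := hP c hmc b hmb hbc.symm hxp
            have hperm : ({a, b, c} : Finset (Fin k)) = {c, a, b} := by
              ext v; simp only [mem_insert, mem_singleton]; tauto
            exact improve2 hT hmax htT hx hy hxy hperm hac.symm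
              hbc.symm hab hxp (by omega) (by omega) e1
      -- split U according to w ≥ 4
      set B := U.filter (fun x => 4 ≤ w x) with hB
      have hBcard : B.card ≤ 1 := by
        rw [card_le_one]
        intro x hx y hy
        by_contra hxy
        exact hD1 x (mem_filter.1 hx).1 y (mem_filter.1 hy).1 hxy
          (mem_filter.1 hx).2 (mem_filter.1 hy).2
      have hsplit : ∑ x ∈ U, w x =
          ∑ x ∈ B, w x + ∑ x ∈ U.filter (fun x => ¬ 4 ≤ w x), w x :=
        (sum_filter_add_sum_filter_not U _ w).symm
      have hb1 : ∑ x ∈ B, w x ≤ B.card • 6 := sum_le_card_nsmul _ _ _ (fun x _ => hw6 x)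
      have hb2 : ∑ x ∈ U.filter (fun x => ¬ 4 ≤ w x), w x ≤
          (U.filter (fun x => ¬ 4 ≤ w x)).card • 3 := by
        refine sum_le_card_nsmul _ _ _ ?_
        intro x hx
        have := (mem_filter.1 hx).2
        omega
      have hcards : B.card + (U.filter (fun x => ¬ 4 ≤ w x)).card = U.card := by
        rw [hB]
        exact card_filter_add_card_filter_not _
      have : ∑ x ∈ U, ∑ v ∈ ({a, b, c} : Finset (Fin k)), m x v = ∑ x ∈ U, w x := by
        refine sum_congr rfl (fun x _ => hsum x)
      rw [this]
      simp only [smul_eq_mul] at hb1 hb2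
      omega
  -- assemble the total count
  have hdisjUC : Disjoint U C := sdiff_disjoint
  have huniv : U ∪ C = Finset.univ := by rw [hU]; exact sdiff_union_of_subset (subset_univ C)
  have hCsum : ∀ x, ∑ v ∈ C, m x v = ∑ t ∈ T, ∑ v ∈ t, m x v := by
    intro x
    rw [hC]
    exact sum_biUnion hT.2
  have htotal : ∑ x ∈ U, ∑ v, m x v =
      ∑ x ∈ U, ∑ v ∈ U, m x v + ∑ t ∈ T, ∑ x ∈ U, ∑ v ∈ t, m x v := by
    have h1 : ∀ x, ∑ v, m x v = ∑ v ∈ U, m x v + ∑ v ∈ C, m x v := by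
      intro x
      rw [← sum_union hdisjUC, huniv]
    calc ∑ x ∈ U, ∑ v, m x v = ∑ x ∈ U, (∑ v ∈ U, m x v + ∑ v ∈ C, m x v) :=
          sum_congr rfl (fun x _ => h1 x)
      _ = ∑ x ∈ U, ∑ v ∈ U, m x v + ∑ x ∈ U, ∑ v ∈ C, m x v := sum_add_distrib
      _ = ∑ x ∈ U, ∑ v ∈ U, m x v + ∑ x ∈ U, ∑ t ∈ T, ∑ v ∈ t, m x v := by
          rw [sum_congr rfl (fun x _ => hCsum x)]
      _ = ∑ x ∈ U, ∑ v ∈ U, m x v + ∑ t ∈ T, ∑ x ∈ U, ∑ v ∈ t, m x v := by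
          congr 1
          exact sum_comm
  have hinner : ∑ x ∈ U, ∑ v ∈ U, m x v ≤ U.card * (U.card - 1) := by
    calc ∑ x ∈ U, ∑ v ∈ U, m x v ≤ U.card • (U.card - 1) := by
          refine sum_le_card_nsmul _ _ _ ?_
          intro x hx
          have := hB1 x hx
          omega
      _ = U.card * (U.card - 1) := by rw [smul_eq_mul]
  have hCcard : ∑ t ∈ T, t.card = C.card := by
    rw [hC]
    exact (card_biUnion (fun x hx y hy hxy => hT.2 (mem_coe.mpr hx) (mem_coe.mpr hy) hxy)).symm
  have houter : ∑ t ∈ T, ∑ x ∈ U, ∑ v ∈ t, m x v ≤ C.card * (U.card + 1) := by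
    calc ∑ t ∈ T, ∑ x ∈ U, ∑ v ∈ t, m x v ≤ ∑ t ∈ T, t.card * (U.card + 1) :=
          sum_le_sum hB2
      _ = (∑ t ∈ T, t.card) * (U.card + 1) := by rw [sum_mul]
      _ = C.card * (U.card + 1) := by rw [hCcard]
  have htotle : ∑ x ∈ U, ∑ v, m x v ≤ U.card * (U.card - 1) + C.card * (U.card + 1) := by
    omega
  -- pass to the reals
  have hlower : (U.card : ℝ) * ((1 + μ) * k) ≤ ((∑ x ∈ U, ∑ v, m x v : ℕ) : ℝ) := by
    push_cast
    calc (U.card : ℝ) * ((1 + μ) * k) = ∑ _x ∈ U, ((1 + μ) * k) := by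
          rw [sum_const, nsmul_eq_mul]
      _ ≤ ∑ x ∈ U, ((∑ v, m x v : ℕ) : ℝ) := by
          refine sum_le_sum ?_
          intro x _
          exact hdeg x
      _ = ∑ x ∈ U, ∑ v, ((m x v : ℕ) : ℝ) := by push_cast; ring
  have hupper : ((∑ x ∈ U, ∑ v, m x v : ℕ) : ℝ) ≤
      (U.card : ℝ) * ((U.card : ℝ) - 1) + (C.card : ℝ) * ((U.card : ℝ) + 1) := by
    have := htotle
    have hcast : ((U.card * (U.card - 1) + C.card * (U.card + 1) : ℕ) : ℝ) =
        (U.card : ℝ) * ((U.card : ℝ) - 1) + (C.card : ℝ) * ((U.card : ℝ) + 1) := by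
      push_cast [Nat.cast_sub hu1]
      ring
    calc ((∑ x ∈ U, ∑ v, m x v : ℕ) : ℝ) ≤
        ((U.card * (U.card - 1) + C.card * (U.card + 1) : ℕ) : ℝ) := Nat.cast_le.2 htotle
      _ = _ := hcast
  -- final algebra
  have hkeq : (U.card : ℝ) + (C.card : ℝ) = k := by exact_mod_cast congrArg Nat.cast hUC
  have hu1' : (1 : ℝ) ≤ U.card := by exact_mod_cast hu1
  have hkpos : (0 : ℝ) < k := by
    have : 1 ≤ k := by omega
    exact_mod_cast Nat.lt_of_lt_of_le Nat.zero_lt_one this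
  have hmain : μ * U.card * k ≤ k - 2 * U.card := by nlinarith [hlower, hupper]
  have hfin : μ * U.card < 1 := by
    have h2 : μ * U.card * k < 1 * k := by nlinarith
    exact lt_of_mul_lt_mul_right h2 (le_of_lt hkpos)
  have : (k : ℝ) - C.card = U.card := by linarith
  rw [this, lt_div_iff₀ hμ0]
  linarith
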